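/- Let G be a triangle-free graph, v a vertex, G₀ = G − v − N(v), and let c be uniform on the proper k-colorings of G − v. Conditioned on the restriction of c to G₀ being c₀, the colors c(u) for u ∈ N(v) are conditionally independent, with c(u) uniformly distributed on L_{c₀}(u). -/

import Mathlib

/-- The finset of proper `k`-colorings of a simple graph on a finite vertex type. -/
def properColorings {W : Type} [Fintype W] [DecidableEq W] (G : SimpleGraph W)
    [DecidableRel G.Adj] (k : ℕ) : Finset (W → Fin k) :=
  Finset.univ.filter fun c => ∀ u w, G.Adj u w → c u ≠ c w

/-- The graph obtained from `G` by deleting the vertex `v`. -/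
def deleteVertex {V : Type} (G : SimpleGraph V) (v : V) : SimpleGraph {u : V // u ≠ v} where
  Adj a b := G.Adj a b
  symm := ⟨fun _ _ h => G.adj_symm h⟩
  loopless := ⟨fun a h => G.irrefl h⟩

instance {V : Type} (G : SimpleGraph V) [DecidableRel G.Adj] (v : V) :
    DecidableRel (deleteVertex G v).Adj :=
  fun a b => inferInstanceAs (Decidable (G.Adj a b))

/-- The graph `G₀ = G - v - N(v)`. -/
def deleteClosedNbhd {V : Type} (G : SimpleGraph V) (v : V) :
    SimpleGraph {w : V // w ≠ v ∧ ¬G.Adj v w} where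
  Adj a b := G.Adj a b
  symm := ⟨fun _ _ h => G.adj_symm h⟩
  loopless := ⟨fun a h => G.irrefl h⟩

instance {V : Type} (G : SimpleGraph V) [DecidableRel G.Adj] (v : V) :
    DecidableRel (deleteClosedNbhd G v).Adj :=
  fun a b => inferInstanceAs (Decidable (G.Adj a b))

/-- Colors in `[k]` not used by a coloring `c₀` of `G₀` on the `G₀`-neighbors of `u`. -/
def availColors₀ {V : Type} [Fintype V] [DecidableEq V] (G : SimpleGraph V)
    [DecidableRel G.Adj] (v u : V) {k : ℕ}
    (c₀ : {w : V // w ≠ v ∧ ¬G.Adj v w} → Fin k) : Finset (Fin k) :=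
  Finset.univ.filter fun j =>
    ∀ (w : V) (h1 : w ≠ v) (h2 : ¬G.Adj v w), G.Adj u w → c₀ ⟨w, h1, h2⟩ ≠ j


/-- Conditioned on the restriction to `G₀` being `c₀`, the colors of the neighbors of `v`
are independent, each uniform on its list of available colors. -/
theorem conditional_law_of_neighbors {V : Type} [Fintype V] [DecidableEq V]
    (G : SimpleGraph V) [DecidableRel G.Adj] (hG : G.CliqueFree 3) (v : V) (k : ℕ)
    (c₀ : {w : V // w ≠ v ∧ ¬G.Adj v w} → Fin k)
    (hc₀ : c₀ ∈ properColorings (deleteClosedNbhd G v) k)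
    (hne : ((properColorings (deleteVertex G v) k).filter
      (fun c => ∀ (w : V) (h1 : w ≠ v) (h2 : ¬G.Adj v w),
        c ⟨w, h1⟩ = c₀ ⟨w, h1, h2⟩)).Nonempty)
    (f : V → Fin k) :
    (((properColorings (deleteVertex G v) k).filter
        (fun c => (∀ (w : V) (h1 : w ≠ v) (h2 : ¬G.Adj v w), c ⟨w, h1⟩ = c₀ ⟨w, h1, h2⟩) ∧
          ∀ (u : V) (h1 : u ≠ v), G.Adj v u → c ⟨u, h1⟩ = f u)).card : ℝ) /
      (((properColorings (deleteVertex G v) k).filter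
        (fun c => ∀ (w : V) (h1 : w ≠ v) (h2 : ¬G.Adj v w),
          c ⟨w, h1⟩ = c₀ ⟨w, h1, h2⟩)).card : ℝ) =
    ∏ u ∈ Finset.univ.filter (fun u : {w : V // w ≠ v} => G.Adj v u),
      (if f u ∈ availColors₀ G v (u : V) c₀
        then (1 : ℝ) / ((availColors₀ G v (u : V) c₀).card : ℝ) else 0) := by
  classical
  set A : {w : V // w ≠ v} → Finset (Fin k) := fun u => availColors₀ G v (u : V) c₀ with hA
  set N : Finset {w : V // w ≠ v} :=
    Finset.univ.filter (fun u : {w : V // w ≠ v} => G.Adj v u) with hN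
  set S := ((properColorings (deleteVertex G v) k).filter
      (fun c => ∀ (w : V) (h1 : w ≠ v) (h2 : ¬G.Adj v w),
        c ⟨w, h1⟩ = c₀ ⟨w, h1, h2⟩)) with hS
  -- no triangles among neighbors of v
  have htri : ∀ a b : V, G.Adj v a → G.Adj v b → ¬ G.Adj a b := by
    intro a b ha hb hab
    exact hG {v, a, b} (SimpleGraph.is3Clique_triple_iff.mpr ⟨ha, hb, hab⟩)
  have hc₀' : ∀ (a b : {w : V // w ≠ v ∧ ¬G.Adj v w}), G.Adj a b → c₀ a ≠ c₀ b := by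
    have := hc₀
    simp only [properColorings, Finset.mem_filter, Finset.mem_univ, true_and] at this
    exact fun a b hab => this a b hab
  -- membership criterion for S
  have hmemS : ∀ c : {w : V // w ≠ v} → Fin k,
      (∀ (w : V) (h1 : w ≠ v) (h2 : ¬G.Adj v w), c ⟨w, h1⟩ = c₀ ⟨w, h1, h2⟩) →
      (∀ u : {w : V // w ≠ v}, G.Adj v (u : V) → c u ∈ A u) → c ∈ S := by
    intro c hext hav
    rw [hS, Finset.mem_filter]
    refine ⟨?_, hext⟩
    simp only [properColorings, Finset.mem_filter, Finset.mem_univ, true_and]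
    intro a b hab
    change G.Adj (a : V) (b : V) at hab
    by_cases ha : G.Adj v (a : V) <;> by_cases hb : G.Adj v (b : V)
    · exact absurd hab (htri _ _ ha hb)
    · have := hav a ha
      rw [hA] at this
      simp only [availColors₀, Finset.mem_filter, Finset.mem_univ, true_and] at this
      have hb' := this (b : V) b.2 hb hab
      rw [hext (b : V) b.2 hb] at *
      exact fun h => hb' h.symm
    · have := hav b hb
      rw [hA] at this
      simp only [availColors₀, Finset.mem_filter, Finset.mem_univ, true_and] at this
      have ha' := this (a : V) a.2 ha (G.adj_symm hab)
      rw [hext (a : V) a.2 ha]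
      exact ha'
    · rw [hext (a : V) a.2 ha, hext (b : V) b.2 hb]
      exact hc₀' ⟨a, a.2, ha⟩ ⟨b, b.2, hb⟩ hab
  -- every coloring in S gives available colors on neighbors
  have hval : ∀ c ∈ S, ∀ u : {w : V // w ≠ v}, G.Adj v (u : V) → c u ∈ A u := by
    intro c hc u hu
    rw [hS, Finset.mem_filter] at hc
    obtain ⟨hcp, hcext⟩ := hc
    simp only [properColorings, Finset.mem_filter, Finset.mem_univ, true_and] at hcp
    rw [hA]
    simp only [availColors₀, Finset.mem_filter, Finset.mem_univ, true_and]
    intro w h1 h2 hadj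
    have : (deleteVertex G v).Adj ⟨w, h1⟩ u := G.adj_symm hadj
    have := hcp _ _ this
    rw [hcext w h1 h2] at this
    exact this
  -- S-colorings are determined by values on N
  have hdet : ∀ c ∈ S, ∀ c' ∈ S, (∀ u : {w : V // w ≠ v}, G.Adj v (u : V) → c u = c' u) →
      c = c' := by
    intro c hc c' hc' h
    rw [hS, Finset.mem_filter] at hc hc'
    funext u
    by_cases hu : G.Adj v (u : V)
    · exact h u hu
    · rw [show u = ⟨(u : V), u.2⟩ from rfl, hc.2 (u : V) u.2 hu, hc'.2 (u : V) u.2 hu]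
  -- cardinality of S
  have hScard : S.card = ∏ u ∈ N, (A u).card := by
    rw [← Finset.card_pi]
    refine Finset.card_bij'
      (i := fun (c : {w : V // w ≠ v} → Fin k) (_ : c ∈ S) => fun u (_ : u ∈ N) => c u)
      (j := fun (p : ∀ u ∈ N, Fin k) (_ : p ∈ N.pi A) => fun (u : {w : V // w ≠ v}) =>
        if h : G.Adj v (u : V) then
          p u (by rw [hN, Finset.mem_filter]; exact ⟨Finset.mem_univ _, h⟩)
        else c₀ ⟨(u : V), u.2, h⟩) ?_ ?_ ?_ ?_
    · intro c hc
      simp only [Finset.mem_pi]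
      intro u hu
      rw [hN, Finset.mem_filter] at hu
      exact hval c hc u hu.2
    · intro p hp
      refine hmemS _ ?_ ?_
      · intro w h1 h2
        simp [h2]
      · intro u hu
        simp only [hu, dif_pos]
        rw [Finset.mem_pi] at hp
        exact hp u _
    · intro c hc
      refine hdet _ ?_ _ hc ?_
      · refine hmemS _ ?_ ?_
        · intro w h1 h2; simp [h2]
        · intro u hu
          simp only [hu, dif_pos]
          exact hval c hc u hu
      · intro u hu
        simp [hu]
    · intro p hp
      funext u hu
      rw [hN, Finset.mem_filter] at hu
      simp [hu.2]
  by_cases hf : ∀ u : {w : V // w ≠ v}, G.Adj v (u : V) → f u ∈ A u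
  · -- numerator is a singleton
    set cstar : {w : V // w ≠ v} → Fin k :=
      fun u => if h : G.Adj v (u : V) then f u else c₀ ⟨(u : V), u.2, h⟩ with hcstar
    have hcstarS : cstar ∈ S := by
      refine hmemS _ ?_ ?_
      · intro w h1 h2; simp [hcstar, h2]
      · intro u hu; simp only [hcstar, hu, dif_pos]; exact hf u hu
    have hnum : ((properColorings (deleteVertex G v) k).filter
        (fun c => (∀ (w : V) (h1 : w ≠ v) (h2 : ¬G.Adj v w), c ⟨w, h1⟩ = c₀ ⟨w, h1, h2⟩) ∧
          ∀ (u : V) (h1 : u ≠ v), G.Adj v u → c ⟨u, h1⟩ = f u)) = {cstar} := by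
      ext c
      simp only [Finset.mem_filter, Finset.mem_singleton]
      constructor
      · rintro ⟨hcp, hcext, hcf⟩
        have hcS : c ∈ S := by rw [hS, Finset.mem_filter]; exact ⟨hcp, hcext⟩
        refine hdet c hcS cstar hcstarS ?_
        intro u hu
        rw [hcf (u : V) u.2 hu]
        simp [hcstar, hu]
      · rintro rfl
        rw [hS, Finset.mem_filter] at hcstarS
        refine ⟨hcstarS.1, hcstarS.2, ?_⟩
        intro u h1 hu
        simp [hcstar, hu]
    rw [hnum, Finset.card_singleton, hScard]
    have hprod : ∀ u ∈ N, (if f (u : V) ∈ availColors₀ G v (u : V) c₀ then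
        (1 : ℝ) / ((availColors₀ G v (u : V) c₀).card : ℝ) else 0)
        = 1 / ((A u).card : ℝ) := by
      intro u hu
      rw [hN, Finset.mem_filter] at hu
      rw [if_pos (hf u hu.2)]
    rw [Finset.prod_congr rfl hprod, Finset.prod_div_distrib]
    push_cast
    simp
  · -- numerator is empty
    push_neg at hf
    obtain ⟨u, hu, hfu⟩ := hf
    have hnum : ((properColorings (deleteVertex G v) k).filter
        (fun c => (∀ (w : V) (h1 : w ≠ v) (h2 : ¬G.Adj v w), c ⟨w, h1⟩ = c₀ ⟨w, h1, h2⟩) ∧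
          ∀ (u : V) (h1 : u ≠ v), G.Adj v u → c ⟨u, h1⟩ = f u)) = ∅ := by
      rw [Finset.eq_empty_iff_forall_notMem]
      intro c hc
      rw [Finset.mem_filter] at hc
      obtain ⟨hcp, hcext, hcf⟩ := hc
      have hcS : c ∈ S := by rw [hS, Finset.mem_filter]; exact ⟨hcp, hcext⟩
      have := hval c hcS u hu
      rw [show c u = f u from hcf (u : V) u.2 hu] at this
      exact hfu this
    rw [hnum]
    rw [Finset.prod_eq_zero (i := u) (by rw [hN, Finset.mem_filter]; exact ⟨Finset.mem_univ _, hu⟩)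
      (by rw [if_neg hfu])]
    simp
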